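/- Let R = ℂ[x₀,…,x₄] and let l₀, l₁, l₂, l₃, l₄ be ℂ-linearly independent linear forms in R. If q₀, q₁, q₂ ∈ R are such that q₂·l₂ + q₁·l₁ + q₀·l₀ lies in the ideal (l₂, l₀l₄ − l₁l₃, l₁², l₀l₁, l₀²), then q₁·l₄ + q₀·l₃ lies in the ideal (l₀, l₁, l₂). -/

import Mathlib

open MvPolynomial

noncomputable section Stmt9Aux

local notation "RR" => MvPolynomial (Fin 5) ℂ

private lemma stmt9_deg_one_single (m : Fin 5 →₀ ℕ) (hm : m 0 + m 1 + m 2 + m 3 + m 4 = 1) :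
    ∃ j, m = Finsupp.single j 1 := by
  have h : (m 0 = 1 ∧ m 1 = 0 ∧ m 2 = 0 ∧ m 3 = 0 ∧ m 4 = 0) ∨
      (m 1 = 1 ∧ m 0 = 0 ∧ m 2 = 0 ∧ m 3 = 0 ∧ m 4 = 0) ∨
      (m 2 = 1 ∧ m 0 = 0 ∧ m 1 = 0 ∧ m 3 = 0 ∧ m 4 = 0) ∨
      (m 3 = 1 ∧ m 0 = 0 ∧ m 1 = 0 ∧ m 2 = 0 ∧ m 4 = 0) ∨
      (m 4 = 1 ∧ m 0 = 0 ∧ m 1 = 0 ∧ m 2 = 0 ∧ m 3 = 0) := by omega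
  rcases h with h | h | h | h | h
  · exact ⟨0, by ext k; fin_cases k <;> simp [Finsupp.single_apply, h.1, h.2.1, h.2.2.1, h.2.2.2.1, h.2.2.2.2]⟩
  · exact ⟨1, by ext k; fin_cases k <;> simp [Finsupp.single_apply, h.1, h.2.1, h.2.2.1, h.2.2.2.1, h.2.2.2.2]⟩
  · exact ⟨2, by ext k; fin_cases k <;> simp [Finsupp.single_apply, h.1, h.2.1, h.2.2.1, h.2.2.2.1, h.2.2.2.2]⟩
  · exact ⟨3, by ext k; fin_cases k <;> simp [Finsupp.single_apply, h.1, h.2.1, h.2.2.1, h.2.2.2.1, h.2.2.2.2]⟩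
  · exact ⟨4, by ext k; fin_cases k <;> simp [Finsupp.single_apply, h.1, h.2.1, h.2.2.1, h.2.2.2.1, h.2.2.2.2]⟩

private lemma stmt9_homog1_decomp (p : RR) (hp : p.IsHomogeneous 1) :
    p = ∑ j : Fin 5, MvPolynomial.C (coeff (Finsupp.single j 1) p) * X j := by
  apply MvPolynomial.ext
  intro m
  rw [coeff_sum]
  simp only [coeff_C_mul, coeff_X']
  by_cases hc : coeff m p = 0
  · rw [hc]
    rw [Finset.sum_eq_zero]
    intro j _
    by_cases h : Finsupp.single j 1 = m
    · rw [if_pos h, h, hc, zero_mul]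
    · rw [if_neg h, mul_zero]
  · have hm : m 0 + m 1 + m 2 + m 3 + m 4 = 1 := by
      have := hp hc
      simp [Finsupp.weight_apply, Finsupp.sum_fintype, Fin.sum_univ_five] at this
      omega
    obtain ⟨j, rfl⟩ := stmt9_deg_one_single m hm
    rw [Finset.sum_eq_single j]
    · simp
    · intro b _ hb
      rw [if_neg, mul_zero]
      rw [Finsupp.single_eq_single_iff]
      rintro (⟨h, -⟩ | ⟨h, -⟩)
      · exact hb h
      · exact one_ne_zero h
    · simp

private def stmt9_vv : Fin 5 → RR := ![0, 0, 0, X 3, X 4]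

private lemma stmt9_sub_aeval_mem (p : RR) :
    p - aeval stmt9_vv p ∈ Ideal.span {(X 0 : RR), X 1, X 2} := by
  induction p using MvPolynomial.induction_on with
  | C a => simp [stmt9_vv]
  | add p q hp hq =>
      have : p + q - aeval stmt9_vv (p + q) =
          (p - aeval stmt9_vv p) + (q - aeval stmt9_vv q) := by
        rw [map_add]; ring
      rw [this]; exact Ideal.add_mem _ hp hq
  | mul_X p i hp =>
      have hX : ((X i : RR) ∈ Ideal.span {(X 0 : RR), X 1, X 2} ∧ aeval stmt9_vv (X i : RR) = 0)
          ∨ aeval stmt9_vv (X i : RR) = X i := by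
        fin_cases i
        · exact Or.inl ⟨Ideal.subset_span (by simp), by simp [stmt9_vv]⟩
        · exact Or.inl ⟨Ideal.subset_span (by simp), by simp [stmt9_vv]⟩
        · exact Or.inl ⟨Ideal.subset_span (by simp), by simp [stmt9_vv]⟩
        · right; simp [stmt9_vv]
        · right; simp [stmt9_vv]
      rcases hX with ⟨h, hz⟩ | h
      · rw [map_mul, hz, mul_zero, sub_zero]
        exact Ideal.mul_mem_left _ _ h
      · rw [map_mul, h]
        have : p * X i - aeval stmt9_vv p * X i = (p - aeval stmt9_vv p) * X i := by ring
        rw [this]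
        exact Ideal.mul_mem_right _ _ hp

private lemma stmt9_mem_span_of_aeval_eq_zero (p : RR) (h : aeval stmt9_vv p = 0) :
    p ∈ Ideal.span {(X 0 : RR), X 1, X 2} := by
  have := stmt9_sub_aeval_mem p
  rwa [h, sub_zero] at this

private lemma stmt9_concrete (q₀ q₁ q₂ : RR)
    (hF : q₂ * X 2 + q₁ * X 1 + q₀ * X 0 ∈
      Ideal.span {(X 2 : RR), X 0 * X 4 - X 1 * X 3, X 1 ^ 2, X 0 * X 1, X 0 ^ 2}) :
    q₁ * X 4 + q₀ * X 3 ∈ Ideal.span {(X 0 : RR), X 1, X 2} := by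
  obtain ⟨a, z1, hz1, h1⟩ := Ideal.mem_span_insert.mp hF
  obtain ⟨b, z2, hz2, h2⟩ := Ideal.mem_span_insert.mp hz1
  obtain ⟨c, z3, hz3, h3⟩ := Ideal.mem_span_insert.mp hz2
  obtain ⟨d, z4, hz4, h4⟩ := Ideal.mem_span_insert.mp hz3
  obtain ⟨e, h5⟩ := Ideal.mem_span_singleton'.mp hz4
  have hEq : q₂ * X 2 + q₁ * X 1 + q₀ * X 0 =
      a * X 2 + b * (X 0 * X 4 - X 1 * X 3) + c * (X 1 * X 1) + d * (X 0 * X 1)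
        + e * (X 0 * X 0) := by
    rw [h1, h2, h3, h4, ← h5]; ring
  have hA : aeval stmt9_vv (q₁ + b * X 3) = 0 := by
    have hA := congrArg (fun p : RR => aeval stmt9_vv (pderiv 1 p)) hEq
    simp only [map_add, map_sub, map_mul, pderiv_mul, pderiv_X, Pi.single_apply] at hA
    simp [stmt9_vv] at hA
    simp [stmt9_vv]
    linear_combination hA
  have hB : aeval stmt9_vv (q₀ - b * X 4) = 0 := by
    have hB := congrArg (fun p : RR => aeval stmt9_vv (pderiv 0 p)) hEq
    simp only [map_add, map_sub, map_mul, pderiv_mul, pderiv_X, Pi.single_apply] at hB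
    simp [stmt9_vv] at hB
    simp [stmt9_vv]
    linear_combination hB
  have key : q₁ * X 4 + q₀ * X 3 = (q₁ + b * X 3) * X 4 + (q₀ - b * X 4) * X 3 := by ring
  rw [key]
  exact Ideal.add_mem _
    (Ideal.mul_mem_right _ _ (stmt9_mem_span_of_aeval_eq_zero _ hA))
    (Ideal.mul_mem_right _ _ (stmt9_mem_span_of_aeval_eq_zero _ hB))

private def stmt9_T : (Fin 5 → ℂ) →ₗ[ℂ] RR where
  toFun v := ∑ j, MvPolynomial.C (v j) * X j
  map_add' v w := by simp [map_add, add_mul, Finset.sum_add_distrib]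
  map_smul' r v := by
    simp [smul_eq_C_mul, Finset.mul_sum, mul_assoc, map_mul]

private lemma stmt9_sum_collapse (M N : Matrix (Fin 5) (Fin 5) ℂ) (hMN : M * N = 1) (i : Fin 5) :
    ∑ j, MvPolynomial.C (M i j) * (∑ k, MvPolynomial.C (N j k) * X k) = (X i : RR) := by
  calc ∑ j, MvPolynomial.C (M i j) * (∑ k, MvPolynomial.C (N j k) * X k)
      = ∑ j, ∑ k, MvPolynomial.C (M i j * N j k) * X k := by
        simp [Finset.mul_sum, map_mul, mul_assoc]
    _ = ∑ k, ∑ j, MvPolynomial.C (M i j * N j k) * X k := Finset.sum_comm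
    _ = ∑ k, MvPolynomial.C ((M * N) i k) * X k := by
        simp [Matrix.mul_apply, map_sum, Finset.sum_mul]
    _ = X i := by
        rw [hMN]
        simp [Matrix.one_apply, apply_ite, ite_mul]

end Stmt9Aux

/-- Case (d) in the proof of Lemma 3.5: if `q₂l₂ + q₁l₁ + q₀l₀` lies in the ideal
`(l₂, l₀l₄ - l₁l₃, l₁², l₀l₁, l₀²)` for linearly independent linear forms `l₀, …, l₄`,
then `q₁l₄ + q₀l₃ ∈ (l₀, l₁, l₂)`. -/
theorem stmt_9 (l₀ l₁ l₂ l₃ l₄ : MvPolynomial (Fin 5) ℂ)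
    (h₀ : l₀.IsHomogeneous 1) (h₁ : l₁.IsHomogeneous 1) (h₂ : l₂.IsHomogeneous 1)
    (h₃ : l₃.IsHomogeneous 1) (h₄ : l₄.IsHomogeneous 1)
    (hind : LinearIndependent ℂ ![l₀, l₁, l₂, l₃, l₄])
    (q₀ q₁ q₂ : MvPolynomial (Fin 5) ℂ)
    (hF : q₂ * l₂ + q₁ * l₁ + q₀ * l₀ ∈
      Ideal.span {l₂, l₀ * l₄ - l₁ * l₃, l₁ ^ 2, l₀ * l₁, l₀ ^ 2}) :
    q₁ * l₄ + q₀ * l₃ ∈ Ideal.span {l₀, l₁, l₂} := by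
  set l : Fin 5 → MvPolynomial (Fin 5) ℂ := ![l₀, l₁, l₂, l₃, l₄] with hl
  have hl0 : l 0 = l₀ := rfl
  have hl1 : l 1 = l₁ := rfl
  have hl2 : l 2 = l₂ := rfl
  have hl3 : l 3 = l₃ := rfl
  have hl4 : l 4 = l₄ := rfl
  have hhom : ∀ i, (l i).IsHomogeneous 1 := by
    intro i; fin_cases i <;> assumption
  set Cm : Matrix (Fin 5) (Fin 5) ℂ :=
    Matrix.of (fun i j => coeff (Finsupp.single j 1) (l i)) with hCm
  have hdecomp : ∀ i, l i = ∑ j, MvPolynomial.C (Cm i j) * X j := fun i =>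
    stmt9_homog1_decomp _ (hhom i)
  have hT : (⇑stmt9_T ∘ fun i => Cm i) = l := by
    funext i; exact (hdecomp i).symm
  have hrows : LinearIndependent ℂ (fun i => Cm i) := by
    apply LinearIndependent.of_comp stmt9_T
    rw [hT]; exact hind
  have hunit : IsUnit Cm := Matrix.linearIndependent_rows_iff_isUnit.mp hrows
  have hdet : IsUnit Cm.det := (Matrix.isUnit_iff_isUnit_det _).mp hunit
  have hCC : Cm * Cm⁻¹ = 1 := Matrix.mul_nonsing_inv _ hdet
  have hCC' : Cm⁻¹ * Cm = 1 := Matrix.nonsing_inv_mul _ hdet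
  set g : Fin 5 → MvPolynomial (Fin 5) ℂ :=
    fun j => ∑ k, MvPolynomial.C (Cm⁻¹ j k) * X k with hg
  set ψ : MvPolynomial (Fin 5) ℂ →ₐ[ℂ] MvPolynomial (Fin 5) ℂ := aeval g with hψ
  set φ : MvPolynomial (Fin 5) ℂ →ₐ[ℂ] MvPolynomial (Fin 5) ℂ := aeval l with hφ
  have hψl : ∀ i, ψ (l i) = X i := by
    intro i
    rw [hdecomp i, map_sum]
    simp only [map_mul, aeval_C, aeval_X, algebraMap_eq, hψ]
    exact stmt9_sum_collapse Cm Cm⁻¹ hCC i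
  have hφg : ∀ j, φ (g j) = X j := by
    intro j
    rw [hg]
    simp only [map_sum, map_mul, aeval_C, aeval_X, algebraMap_eq, hφ]
    calc ∑ k, MvPolynomial.C (Cm⁻¹ j k) * l k
        = ∑ k, MvPolynomial.C (Cm⁻¹ j k) * (∑ m, MvPolynomial.C (Cm k m) * X m) := by
          refine Finset.sum_congr rfl fun k _ => ?_
          rw [← hdecomp k]
      _ = X j := stmt9_sum_collapse Cm⁻¹ Cm hCC' j
  have hφψ : ∀ p, φ (ψ p) = p := by
    have hcomp : φ.comp ψ = AlgHom.id ℂ (MvPolynomial (Fin 5) ℂ) := by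
      apply MvPolynomial.algHom_ext
      intro i
      simp only [AlgHom.comp_apply, AlgHom.id_apply]
      rw [hψ, aeval_X]
      exact hφg i
    intro p
    have := DFunLike.congr_fun hcomp p
    simpa using this
  -- transfer the hypothesis
  have h1 := Ideal.mem_map_of_mem ψ hF
  rw [Ideal.map_span] at h1
  have himg : ψ '' {l₂, l₀ * l₄ - l₁ * l₃, l₁ ^ 2, l₀ * l₁, l₀ ^ 2} =
      ({X 2, X 0 * X 4 - X 1 * X 3, X 1 ^ 2, X 0 * X 1, X 0 ^ 2} :
        Set (MvPolynomial (Fin 5) ℂ)) := by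
    have e0 : ψ l₀ = X 0 := by rw [← hl0]; exact hψl 0
    have e1 : ψ l₁ = X 1 := by rw [← hl1]; exact hψl 1
    have e2 : ψ l₂ = X 2 := by rw [← hl2]; exact hψl 2
    have e3 : ψ l₃ = X 3 := by rw [← hl3]; exact hψl 3
    have e4 : ψ l₄ = X 4 := by rw [← hl4]; exact hψl 4
    simp only [Set.image_insert_eq, Set.image_singleton, map_sub, map_mul, map_pow,
      e0, e1, e2, e3, e4]
  rw [himg] at h1
  have hFψ : ψ q₂ * X 2 + ψ q₁ * X 1 + ψ q₀ * X 0 ∈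
      Ideal.span ({X 2, X 0 * X 4 - X 1 * X 3, X 1 ^ 2, X 0 * X 1, X 0 ^ 2} :
        Set (MvPolynomial (Fin 5) ℂ)) := by
    have e0 : ψ l₀ = X 0 := by rw [← hl0]; exact hψl 0
    have e1 : ψ l₁ = X 1 := by rw [← hl1]; exact hψl 1
    have e2 : ψ l₂ = X 2 := by rw [← hl2]; exact hψl 2
    have : ψ (q₂ * l₂ + q₁ * l₁ + q₀ * l₀) = ψ q₂ * X 2 + ψ q₁ * X 1 + ψ q₀ * X 0 := by
      simp only [map_add, map_mul, e0, e1, e2]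
    rwa [this] at h1
  have h2 := stmt9_concrete (ψ q₀) (ψ q₁) (ψ q₂) hFψ
  -- transfer back
  have h3 := Ideal.mem_map_of_mem φ h2
  rw [Ideal.map_span] at h3
  have himg2 : φ '' {X 0, X 1, X 2} = ({l₀, l₁, l₂} : Set (MvPolynomial (Fin 5) ℂ)) := by
    simp only [Set.image_insert_eq, Set.image_singleton, hφ, aeval_X, hl0, hl1, hl2]
  rw [himg2] at h3
  have : φ (ψ q₁ * X 4 + ψ q₀ * X 3) = q₁ * l₄ + q₀ * l₃ := by
    simp only [map_add, map_mul, hφψ, hφ, aeval_X, hl3, hl4]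
    rw [← hφ, hφψ, hφψ]
  rwa [this] at h3
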